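/- Let N ≥ 0 and let (X_n, F_n, P), 0 ≤ n ≤ N, be a discrete-time adapted stochastic process with X_N ≥ 0 and X_N integrable. Suppose there exists a > 0 such that E(X_N | F_n) ≥ a·X_n almost surely for all 0 ≤ n < N. Then for every α > 0, P(max_{0≤n≤N} X_n ≥ α) ≤ (1/(α·min(a,1)))·E[X_N · 1{max_{0≤n≤N} X_n ≥ α}]. -/

import Mathlib

open MeasureTheory Filter

/-- **Improved Doob inequality (discrete).** If `(X n)_{n ≤ N}` is adapted, `X N ≥ 0` is
integrable, and `E(X N | ℱ n) ≥ a • X n` a.s. for all `n < N` with `a > 0`, then for `α > 0`,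
`P(max_{0 ≤ n ≤ N} X n ≥ α) ≤ (1/(α * min a 1)) * E[X N ; max_{0 ≤ n ≤ N} X n ≥ α]`. -/
theorem improved_doob_discrete
    {Ω : Type*} {m0 : MeasurableSpace Ω} {μ : Measure Ω} [IsProbabilityMeasure μ]
    {N : ℕ} {ℱ : Filtration ℕ m0} {X : ℕ → Ω → ℝ}
    (hadp : Adapted ℱ X)
    (hpos : 0 ≤ X N) (hint : Integrable (X N) μ)
    {a : ℝ} (ha : 0 < a)
    (hcond : ∀ n < N, (fun ω => a * X n ω) ≤ᵐ[μ] μ[X N | ℱ n])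
    (α : ℝ) (hα : 0 < α) :
    (μ {ω | α ≤ (Finset.range (N + 1)).sup' (by simp) (fun n => X n ω)}).toReal ≤
      (1 / (α * min a 1)) *
        ∫ ω in {ω | α ≤ (Finset.range (N + 1)).sup' (by simp) (fun n => X n ω)}, X N ω ∂μ := by
  classical
  set c : ℝ := min a 1 with hc
  have hc0 : 0 < c := lt_min ha one_pos
  set A : Set Ω := {ω | α ≤ (Finset.range (N + 1)).sup' (by simp) fun n => X n ω} with hA
  set τ : Ω → ℕ := hittingBtwn X (Set.Ici α) 0 N with hτ
  have hτst : IsStoppingTime ℱ (fun ω => (τ ω : WithTop ℕ)) :=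
    hadp.isStoppingTime_hittingBtwn measurableSet_Ici
  have hAmem : ∀ ω, ω ∈ A ↔ ∃ j ∈ Set.Icc 0 N, X j ω ∈ Set.Ici α := by
    intro ω
    simp only [hA, Set.mem_setOf_eq, Finset.le_sup'_iff, Finset.mem_range, Nat.lt_succ_iff,
      Set.mem_Icc, Set.mem_Ici]
    constructor
    · rintro ⟨j, hj, hje⟩; exact ⟨j, ⟨Nat.zero_le _, hj⟩, hje⟩
    · rintro ⟨j, ⟨_, hj⟩, hje⟩; exact ⟨j, hj, hje⟩
  have hmeasA : MeasurableSet A :=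
    measurableSet_le measurable_const
      (Finset.measurable_range_sup'' fun n _ => (hadp n).le (ℱ.le n))
  set B : ℕ → Set Ω := fun n => A ∩ {ω | τ ω = n} with hB
  have hBmeas : ∀ n, MeasurableSet (B n) := fun n =>
    hmeasA.inter (ℱ.le n _ (by simpa using hτst.measurableSet_eq n))
  have hXτ : ∀ ω ∈ A, α ≤ X (τ ω) ω := fun ω hω => hittingBtwn_mem_set ((hAmem ω).1 hω)
  have hτN : ∀ ω, ω ∉ A → τ ω = N := by
    intro ω hω
    exact hittingBtwn_eq_end_iff.2 fun h => absurd ((hAmem ω).2 h) hω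
  have hBunion : A = ⋃ n ∈ Finset.range (N + 1), B n := by
    ext ω
    simp only [Set.mem_iUnion, Finset.mem_range, Nat.lt_succ_iff, hB, Set.mem_inter_iff,
      Set.mem_setOf_eq]
    constructor
    · intro hω; exact ⟨τ ω, hittingBtwn_le ω, hω, rfl⟩
    · rintro ⟨n, _, hω, _⟩; exact hω
  have hdisj : (↑(Finset.range (N + 1)) : Set ℕ).Pairwise (Function.onFun Disjoint B) := by
    intro i _ j _ hij
    simp only [Function.onFun, Set.disjoint_left]
    rintro ω ⟨_, hi⟩ ⟨_, hj⟩
    exact hij (hi.symm.trans hj)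
  have key : ∀ n ∈ Finset.range (N + 1), α * c * (μ (B n)).toReal ≤ ∫ ω in B n, X N ω ∂μ := by
    intro n hn
    rw [Finset.mem_range, Nat.lt_succ_iff] at hn
    by_cases hnN : n < N
    case neg =>
      -- case n = N
      have hnN' : n = N := le_antisymm hn (not_lt.1 hnN)
      subst hnN'
      have h1 : ∀ ω ∈ B n, α ≤ X n ω := by
        rintro ω ⟨hωA, hωτ⟩
        have := hXτ ω hωA
        rwa [hωτ] at this
      have h2 := setIntegral_ge_of_const_le (hBmeas n) (measure_ne_top μ _) h1
        hint.integrableOn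
      have h3 : α * c * (μ (B n)).toReal ≤ α * (μ (B n)).toReal := by
        have h3' : α * c ≤ α := by nlinarith [min_le_right a 1]
        exact mul_le_mul_of_nonneg_right h3' ENNReal.toReal_nonneg
      rw [smul_eq_mul, measureReal_def] at h2
      linarith
    case pos =>
      -- case n < N
      have hBn : B n = {ω | τ ω = n} := by
        ext ω
        simp only [hB, Set.mem_inter_iff, Set.mem_setOf_eq]
        constructor
        · rintro ⟨_, h⟩; exact h
        · intro h
          refine ⟨?_, h⟩
          by_contra hωA
          exact absurd ((hτN ω hωA).symm.trans h) hnN.ne'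
      have hBF : MeasurableSet[ℱ n] (B n) := by
        rw [hBn]; simpa using hτst.measurableSet_eq n
      have hce : ∫ ω in B n, (μ[X N|ℱ n]) ω ∂μ = ∫ ω in B n, X N ω ∂μ :=
        setIntegral_condExp (ℱ.le n) hint hBF
      have hlb : ∀ᵐ ω ∂μ.restrict (B n), a * α ≤ (μ[X N|ℱ n]) ω := by
        filter_upwards [ae_restrict_mem (hBmeas n), ae_restrict_of_ae (hcond n hnN)]
          with ω hωB hωc
        have hαn : α ≤ X n ω := by
          have := hXτ ω hωB.1
          rwa [hωB.2] at this
        calc a * α ≤ a * X n ω := by nlinarith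
          _ ≤ (μ[X N|ℱ n]) ω := hωc
      have h4 : a * α * (μ (B n)).toReal ≤ ∫ ω in B n, (μ[X N|ℱ n]) ω ∂μ := by
        have h5 : ∫ _ω in B n, (a * α) ∂μ ≤ ∫ ω in B n, (μ[X N|ℱ n]) ω ∂μ :=
          integral_mono_ae (integrable_const _) integrable_condExp.integrableOn hlb
        rwa [setIntegral_const, smul_eq_mul, mul_comm] at h5
      have h6 : α * c * (μ (B n)).toReal ≤ a * α * (μ (B n)).toReal := by
        have h6' : α * c ≤ a * α := by nlinarith [min_le_left a 1]
        exact mul_le_mul_of_nonneg_right h6' ENNReal.toReal_nonneg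
      linarith [hce ▸ h4]
  have hmeasure : (μ A).toReal = ∑ n ∈ Finset.range (N + 1), (μ (B n)).toReal := by
    rw [hBunion, measure_biUnion_finset hdisj fun n _ => hBmeas n,
      ENNReal.toReal_sum fun n _ => measure_ne_top μ _]
  have hIntegral : ∫ ω in A, X N ω ∂μ = ∑ n ∈ Finset.range (N + 1), ∫ ω in B n, X N ω ∂μ := by
    rw [hBunion, integral_biUnion_finset _ (fun n _ => hBmeas n) hdisj
      fun n _ => hint.integrableOn]
  have hsum : α * c * (μ A).toReal ≤ ∫ ω in A, X N ω ∂μ := by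
    rw [hmeasure, hIntegral, Finset.mul_sum]
    exact Finset.sum_le_sum key
  have hαc : 0 < α * c := mul_pos hα hc0
  rw [one_div_mul_eq_div, le_div_iff₀ hαc]
  linarith
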